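/- Let Y = {Y_t}_{t∈T} be a binary stochastic process with values in {0,1}. Then the capacity functional C : F(T) → ℝ defined by C(∅) = 0 and C(A) = P(∃ t ∈ A with Y_t = 1) for nonempty finite A is completely alternating on the semigroup (F(T), ∪): for all n ≥ 1 and finite subsets K, K₁,…,Kₙ of T, Σ_{I ⊆ {1,…,n}} (−1)^{|I|} C(K ∪ ⋃_{i∈I} Kᵢ) ≤ 0. -/

import Mathlib

open Finset MeasureTheory

private lemma ite_or_prod {n : ℕ} (q : Prop) [Decidable q] (r : Fin n → Prop)
    [DecidablePred r] (I : Finset (Fin n)) :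
    (if (q ∨ ∃ i ∈ I, r i) then (1:ℝ) else 0)
      = 1 - (if q then 0 else 1) * ∏ i ∈ I, (if r i then (0:ℝ) else 1) := by
  by_cases hq : q
  · simp [hq]
  · by_cases hr : ∃ i ∈ I, r i
    · obtain ⟨i, hi, hri⟩ := hr
      rw [Finset.prod_eq_zero hi (by simp [hri])]
      simp [hq, hri]
      exact ⟨i, hi, hri⟩
    · have : ∏ i ∈ I, (if r i then (0:ℝ) else 1) = 1 := by
        apply Finset.prod_eq_one
        intro i hi
        refine if_neg ?_
        intro h
        exact hr ⟨i, hi, h⟩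
      simp [hq, hr, this]

/-- The capacity functional `C(A) = P(∃ t ∈ A, Y_t = 1)` of a binary stochastic
process `Y` is completely alternating on the semigroup `(Finset T, ∪)`. -/
theorem capacity_completely_alternating {T : Type*} [DecidableEq T]
    {Ω : Type*} [MeasurableSpace Ω] (P : Measure Ω) [IsProbabilityMeasure P]
    (Y : T → Ω → Bool) (hY : ∀ t, MeasurableSet {ω | Y t ω = true})
    (C : Finset T → ℝ)
    (hC : ∀ A : Finset T, C A = (P {ω | ∃ t ∈ A, Y t ω = true}).toReal) :
    ∀ n : ℕ, 1 ≤ n → ∀ (K : Finset T) (Ks : Fin n → Finset T),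
      ∑ I ∈ (Finset.univ : Finset (Fin n)).powerset,
        (-1 : ℝ) ^ I.card * C (K ∪ I.sup Ks) ≤ 0 := by
  intro n hn K Ks
  classical
  set A : Finset T → Set Ω := fun S => {ω | ∃ t ∈ S, Y t ω = true} with hA
  have hmeas : ∀ S : Finset T, MeasurableSet (A S) := by
    intro S
    have h : A S = ⋃ t ∈ (S : Set T), {ω | Y t ω = true} := by
      ext ω; simp [hA]
    rw [h]
    exact MeasurableSet.biUnion S.countable_toSet (fun t _ => hY t)
  have hCint : ∀ S : Finset T, C S = ∫ ω, (A S).indicator (fun _ => (1:ℝ)) ω ∂P := by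
    intro S
    rw [hC S]; refine (integral_indicator_one (hmeas S)).symm.trans ?_
    rfl
  have hint : ∀ S : Finset T, Integrable ((A S).indicator (fun _ => (1:ℝ))) P := by
    intro S
    exact (integrable_indicator_iff (hmeas S)).2
      (integrableOn_const (measure_lt_top P _).ne)
  have key : ∑ I ∈ (univ : Finset (Fin n)).powerset, (-1:ℝ)^I.card * C (K ∪ I.sup Ks)
      = ∫ ω, ∑ I ∈ (univ : Finset (Fin n)).powerset,
          (-1:ℝ)^I.card * (A (K ∪ I.sup Ks)).indicator (fun _ => (1:ℝ)) ω ∂P := by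
    rw [integral_finset_sum _ (fun I _ => ((hint _).const_mul _))]
    refine Finset.sum_congr rfl (fun I _ => ?_)
    rw [hCint, integral_const_mul]
  rw [key]
  apply integral_nonpos
  intro ω
  simp only [Pi.zero_apply]
  have hind : ∀ I : Finset (Fin n),
      (A (K ∪ I.sup Ks)).indicator (fun _ => (1:ℝ)) ω
        = 1 - (if (∃ t ∈ K, Y t ω = true) then (0:ℝ) else 1)
            * ∏ i ∈ I, (if (∃ t ∈ Ks i, Y t ω = true) then (0:ℝ) else 1) := by
    intro I
    rw [Set.indicator_apply]
    rw [← ite_or_prod (∃ t ∈ K, Y t ω = true) (fun i => ∃ t ∈ Ks i, Y t ω = true) I]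
    congr 1
    simp only [hA, Set.mem_setOf_eq, Finset.mem_union, Finset.mem_sup, eq_iff_iff]
    constructor
    · rintro ⟨t, ht | ⟨i, hi, ht⟩, hY'⟩
      · exact Or.inl ⟨t, ht, hY'⟩
      · exact Or.inr ⟨i, hi, t, ht, hY'⟩
    · rintro (⟨t, ht, hY'⟩ | ⟨i, hi, t, ht, hY'⟩)
      · exact ⟨t, Or.inl ht, hY'⟩
      · exact ⟨t, Or.inr ⟨i, hi, ht⟩, hY'⟩
  simp_rw [hind, mul_sub, mul_one, Finset.sum_sub_distrib]
  set c : ℝ := if (∃ t ∈ K, Y t ω = true) then (0:ℝ) else 1 with hc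
  set d : Fin n → ℝ := fun i => if (∃ t ∈ Ks i, Y t ω = true) then (0:ℝ) else 1 with hd
  have h1 : ∑ I ∈ (univ : Finset (Fin n)).powerset, (-1:ℝ)^I.card = 0 := by
    have hp := Finset.prod_add (fun _ : Fin n => (-1:ℝ)) (fun _ => (1:ℝ))
      (univ : Finset (Fin n))
    simp only [Finset.prod_const_one, mul_one, Finset.prod_const] at hp
    rw [← hp, neg_add_cancel]
    exact zero_pow (by simp only [Finset.card_univ, Fintype.card_fin]; omega)
  have h2 : ∑ I ∈ (univ : Finset (Fin n)).powerset,
      (-1:ℝ)^I.card * (c * ∏ i ∈ I, d i)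
        = c * ∏ i ∈ (univ : Finset (Fin n)), (1 - d i) := by
    have step : ∀ I ∈ (univ : Finset (Fin n)).powerset,
        (-1:ℝ)^I.card * (c * ∏ i ∈ I, d i) = c * ∏ i ∈ I, (-d i) := by
      intro I _
      have hneg : ∀ i ∈ I, -d i = (-1:ℝ) * d i := fun i _ => by ring
      rw [Finset.prod_congr rfl hneg, Finset.prod_mul_distrib, Finset.prod_const]
      ring
    rw [Finset.sum_congr rfl step, ← Finset.mul_sum]
    congr 1
    have hp := Finset.prod_add (fun i => -d i) (fun _ => (1:ℝ)) (univ : Finset (Fin n))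
    simp only [Finset.prod_const_one, mul_one] at hp
    rw [← hp]
    exact Finset.prod_congr rfl (fun i _ => by ring)
  rw [h1, h2]
  simp only [zero_sub, neg_nonpos]
  apply mul_nonneg
  · rw [hc]; split <;> norm_num
  · apply Finset.prod_nonneg
    intro i _
    rw [hd]; simp only; split <;> norm_num
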